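/- Let $T_k$ be the number of i.i.d. draws from $p=(p_1,\ldots,p_N)$ until $k$ distinct elements are seen, with all $p_i > 0$ (or at least $k$ positive). Then $E(T_k) = \sum_{A \subseteq H, |A| \le k-1} (-1)^{k-1-|A|} \binom{N-|A|-1}{k-1-|A|} \frac{1}{1 - p_A}$, where $p_A = \sum_{i\in A} p_i$ and the sum ranges over $A$ with $p_A < 1$. -/

import Mathlib

open Finset


lemma signsplit (a b : ℕ) (h : b ≤ a) : (-1:ℝ)^(a-b) = (-1)^b * (-1)^a := by
  have h2 : (a-b) + 2*b = b + a := by omega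
  calc (-1:ℝ)^(a-b) = (-1)^(a-b) * ((-1)^2)^b := by norm_num
  _ = (-1)^((a-b)+2*b) := by rw [← pow_mul, ← pow_add]
  _ = (-1)^b * (-1)^a := by rw [h2, pow_add]

lemma key (M : ℕ) : ∀ r : ℕ, r < M →
    ∑ t ∈ range (r+1), (-1:ℝ)^(r-t) * (M.choose t) * ((M-t-1).choose (r-t)) = 1 := by
  intro r
  induction r with
  | zero => intro _; simp
  | succ r ih =>
    intro hr
    have hr' : r < M := by omega
    have halt : ∑ t ∈ range (r+2), (-1:ℝ)^(r+1-t) * (M.choose t) * ((M-t).choose (r+1-t)) = 0 := by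
      have h1 : ∀ t ∈ range (r+2), (-1:ℝ)^(r+1-t) * (M.choose t) * ((M-t).choose (r+1-t))
          = (M.choose (r+1) : ℝ) * ((-1)^t * ((r+1).choose t)) * (-1)^(r+1) := by
        intro t ht
        rw [mem_range] at ht
        have htr : t ≤ r+1 := by omega
        have hcm : (M.choose (r+1) : ℝ) * ((r+1).choose t) = (M.choose t : ℝ) * ((M-t).choose (r+1-t)) := by
          exact_mod_cast congrArg (Nat.cast (R := ℝ)) (Nat.choose_mul (n := M) htr)
        rw [signsplit _ _ htr]
        linear_combination ((-1:ℝ)^t * (-1)^r) * hcm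
      rw [Finset.sum_congr rfl h1, ← Finset.sum_mul, ← Finset.mul_sum]
      have : ∑ t ∈ range (r+2), (-1:ℝ)^t * ((r+1).choose t) = 0 := by
        have := Int.alternating_sum_range_choose (n := r+1)
        rw [if_neg (by omega)] at this
        exact_mod_cast congrArg (Int.cast (R := ℝ)) this
      rw [this, mul_zero, zero_mul]
    have hpeel : ∑ t ∈ range (r+2), (-1:ℝ)^(r+1-t) * (M.choose t) * ((M-t).choose (r+1-t))
        = (∑ t ∈ range (r+1), (-1:ℝ)^(r+1-t) * (M.choose t) * ((M-t).choose (r+1-t)))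
          + (M.choose (r+1) : ℝ) := by
      rw [Finset.sum_range_succ]; simp
    have hB : (∑ t ∈ range (r+1), (-1:ℝ)^(r+1-t) * (M.choose t) * ((M-t).choose (r+1-t)))
        = -(M.choose (r+1) : ℝ) := by linarith [halt, hpeel]
    rw [Finset.sum_range_succ]
    have hlast : (-1:ℝ)^(r+1-(r+1)) * (M.choose (r+1)) * ((M-(r+1)-1).choose (r+1-(r+1)))
        = (M.choose (r+1) : ℝ) := by simp
    rw [hlast]
    have hsplit : ∀ t ∈ range (r+1), (-1:ℝ)^(r+1-t) * (M.choose t) * ((M-t-1).choose (r+1-t))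
        = (-1:ℝ)^(r+1-t) * (M.choose t) * ((M-t).choose (r+1-t))
          + (-1:ℝ)^(r-t) * (M.choose t) * ((M-t-1).choose (r-t)) := by
      intro t ht
      rw [mem_range] at ht
      have h1 : (M-t).choose (r+1-t) = (M-t-1).choose (r-t) + (M-t-1).choose (r+1-t) := by
        have e1 : M - t = (M - t - 1) + 1 := by omega
        have e2 : r + 1 - t = (r - t) + 1 := by omega
        rw [e1, e2, Nat.choose_succ_succ]
        simp only [Nat.add_sub_cancel]
      have h2 : (-1:ℝ)^(r+1-t) = -(-1:ℝ)^(r-t) := by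
        have e2 : r + 1 - t = (r - t) + 1 := by omega
        rw [e2, pow_succ]; ring
      rw [h1, h2]; push_cast; ring
    rw [Finset.sum_congr rfl hsplit, Finset.sum_add_distrib, hB, ih hr']
    ring


lemma hits (f : ℕ → ℕ) (h0 : f 0 = 0) (hstep : ∀ m, f (m+1) ≤ f m + 1) :
    ∀ n k, k ≤ f n → ∃ m ≤ n, f m = k := by
  intro n
  induction n with
  | zero => intro k hk; exact ⟨0, le_refl 0, by omega⟩
  | succ n ih =>
    intro k hk
    by_cases h : k ≤ f n
    · obtain ⟨m, hm, he⟩ := ih k h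
      exact ⟨m, by omega, he⟩
    · exact ⟨n+1, le_refl _, by have := hstep n; omega⟩

lemma prefCount_zero {N n : ℕ} (ω : Fin n → Fin N) :
    ((Finset.univ.filter (fun i : Fin n => (i : ℕ) < 0)).image ω).card = 0 := by
  simp

lemma prefCount_top {N n : ℕ} (ω : Fin n → Fin N) :
    ((Finset.univ.filter (fun i : Fin n => (i : ℕ) < n)).image ω).card
      = (Finset.univ.image ω).card := by
  congr 1
  congr 1
  apply Finset.filter_true_of_mem
  intro i _
  exact i.isLt

lemma prefCount_step {N n : ℕ} (ω : Fin n → Fin N) (m : ℕ) :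
    ((Finset.univ.filter (fun i : Fin n => (i : ℕ) < m + 1)).image ω).card
      ≤ ((Finset.univ.filter (fun i : Fin n => (i : ℕ) < m)).image ω).card + 1 := by
  by_cases hm : m < n
  · have : (Finset.univ.filter (fun i : Fin n => (i : ℕ) < m + 1))
        = insert (⟨m, hm⟩ : Fin n) (Finset.univ.filter (fun i : Fin n => (i : ℕ) < m)) := by
      ext i
      simp only [mem_filter, mem_insert, mem_univ, true_and, Fin.ext_iff]
      omega
    rw [this, Finset.image_insert]
    exact (Finset.card_insert_le _ _)
  · have : (Finset.univ.filter (fun i : Fin n => (i : ℕ) < m + 1))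
        = (Finset.univ.filter (fun i : Fin n => (i : ℕ) < m)) := by
      apply Finset.filter_congr
      intro i _
      have := i.isLt
      constructor <;> intro <;> omega
    rw [this]
    omega

lemma prefCount_mono {N n : ℕ} (ω : Fin n → Fin N) (m : ℕ) :
    ((Finset.univ.filter (fun i : Fin n => (i : ℕ) < m)).image ω).card
      ≤ (Finset.univ.image ω).card :=
  Finset.card_le_card (Finset.image_subset_image (Finset.subset_univ _))

lemma event_iff {N n k : ℕ} (ω : Fin n → Fin N) :
    (∀ m ≤ n, ((Finset.univ.filter (fun i : Fin n => (i : ℕ) < m)).image ω).card ≠ k)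
      ↔ (Finset.univ.image ω).card < k := by
  constructor
  · intro h
    by_contra hc
    push_neg at hc
    obtain ⟨m, hm, he⟩ := hits (fun m => ((Finset.univ.filter (fun i : Fin n => (i : ℕ) < m)).image ω).card)
      (prefCount_zero ω) (prefCount_step ω) n k (by simpa only [] using (prefCount_top ω ▸ hc : k ≤ ((Finset.univ.filter (fun i : Fin n => (i : ℕ) < n)).image ω).card))
    exact h m hm he
  · intro h m _
    exact fun he => absurd (he ▸ prefCount_mono ω m) (by omega)



lemma coeff {N : ℕ} (k : ℕ) (hk1 : 1 ≤ k) (hkN : k ≤ N) (S : Finset (Fin N)) :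
    ∑ A ∈ (Finset.univ.powerset.filter (fun A : Finset (Fin N) => A.card ≤ k-1)).filter
        (fun A => S ⊆ A),
      (-1:ℝ)^(k-1-A.card) * ((N-A.card-1).choose (k-1-A.card))
      = if S.card < k then 1 else 0 := by
  have hN : Fintype.card (Fin N) = N := Fintype.card_fin N
  by_cases hS : S.card < k
  · rw [if_pos hS]
    set s0 := S.card with hs0
    set r := k - 1 - s0 with hrdef
    have hs0k : s0 ≤ k - 1 := by omega
    -- reindex by B = A \ S
    have hre : ∑ A ∈ (Finset.univ.powerset.filter (fun A : Finset (Fin N) => A.card ≤ k-1)).filter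
        (fun A => S ⊆ A),
        (-1:ℝ)^(k-1-A.card) * ((N-A.card-1).choose (k-1-A.card))
        = ∑ B ∈ Sᶜ.powerset.filter (fun B => B.card ≤ r),
            (-1:ℝ)^(k-1-(s0 + B.card)) * ((N-(s0 + B.card)-1).choose (k-1-(s0 + B.card))) := by
      apply Finset.sum_nbij' (fun A => A \ S) (fun B => S ∪ B)
      · intro A hA
        simp only [mem_filter, mem_powerset] at hA ⊢
        obtain ⟨⟨_, hcard⟩, hSA⟩ := hA
        constructor
        · intro x hx
          simp only [mem_sdiff] at hx
          simp [mem_compl, hx.2]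
        · have : (A \ S).card = A.card - s0 := by
            rw [card_sdiff_of_subset hSA]
          omega
      · intro B hB
        simp only [mem_filter, mem_powerset] at hB ⊢
        obtain ⟨hBc, hBcard⟩ := hB
        have hdisj : Disjoint S B := by
          rw [Finset.disjoint_left]
          intro x hxS hxB
          exact absurd hxS (by simpa using hBc hxB)
        refine ⟨⟨Finset.subset_univ _, ?_⟩, Finset.subset_union_left⟩
        rw [Finset.card_union_of_disjoint hdisj]
        omega
      · intro A hA
        simp only [mem_filter, mem_powerset] at hA
        exact (Finset.union_sdiff_of_subset hA.2).symm ▸ (Finset.union_sdiff_of_subset hA.2)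
      · intro B hB
        simp only [mem_filter, mem_powerset] at hB
        have hdisj : Disjoint S B := by
          rw [Finset.disjoint_left]
          intro x hxS hxB
          exact absurd hxS (by simpa using hB.1 hxB)
        rw [Finset.union_sdiff_cancel_left hdisj]
      · intro A hA
        simp only [mem_filter, mem_powerset] at hA
        have hcard : (A \ S).card = A.card - s0 := card_sdiff_of_subset hA.2
        have : s0 + (A \ S).card = A.card := by
          have := Finset.card_le_card hA.2
          omega
        rw [this]
    rw [hre]
    -- now group by cardinality
    rw [Finset.sum_filter, Finset.sum_powerset]
    have hcompl : Sᶜ.card = N - s0 := by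
      rw [Finset.card_compl, hN]
    set M := N - s0 with hM
    have hrM : r < M := by omega
    have inner : ∀ j ∈ range (Sᶜ.card + 1),
        (∑ B ∈ powersetCard j Sᶜ, if B.card ≤ r then
          (-1:ℝ)^(k-1-(s0 + B.card)) * ((N-(s0 + B.card)-1).choose (k-1-(s0 + B.card))) else 0)
        = if j ≤ r then (M.choose j : ℝ) * ((-1:ℝ)^(r-j) * ((M-j-1).choose (r-j))) else 0 := by
      intro j hj
      have hconst : ∀ B ∈ powersetCard j Sᶜ, (if B.card ≤ r then
          (-1:ℝ)^(k-1-(s0 + B.card)) * ((N-(s0 + B.card)-1).choose (k-1-(s0 + B.card))) else 0)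
          = if j ≤ r then (-1:ℝ)^(r-j) * ((M-j-1).choose (r-j)) else 0 := by
        intro B hB
        rw [mem_powersetCard] at hB
        rw [hB.2]
        have e1 : k - 1 - (s0 + j) = r - j := by omega
        have e2 : N - (s0 + j) - 1 = M - j - 1 := by omega
        rw [e1, e2]
      rw [Finset.sum_congr rfl hconst, Finset.sum_const, Finset.card_powersetCard, hcompl]
      by_cases hjr : j ≤ r
      · simp [hjr, nsmul_eq_mul]
      · simp [hjr]
    rw [Finset.sum_congr rfl inner]
    rw [← Finset.sum_filter]
    have hfilt : (range (Sᶜ.card + 1)).filter (fun j => j ≤ r) = range (r + 1) := by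
      ext j
      simp only [mem_filter, mem_range]
      omega
    rw [hfilt]
    refine (Finset.sum_congr rfl fun t _ => by ring).trans (key M r hrM)
  · rw [if_neg hS]
    rw [Finset.filter_false_of_mem, Finset.sum_empty]
    intro A hA hSA
    rw [mem_filter, mem_powerset] at hA
    have := Finset.card_le_card hSA
    omega



/-- The probability of an event `E` for `n` i.i.d. draws from the distribution `p`
on `{1, …, N}`: the sum of the product weights of the outcome sequences in `E`. -/
noncomputable def prob {N : ℕ} (p : Fin N → ℝ) {n : ℕ} (E : Set (Fin n → Fin N)) : ℝ :=
  ∑ ω : Fin n → Fin N, Set.indicator E (fun ω => ∏ i, p (ω i)) ω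

/-- The number of distinct values drawn, `Y_n`. -/
noncomputable def distinctCount {N n : ℕ} (ω : Fin n → Fin N) : ℕ :=
  (Finset.univ.image ω).card

/-- The number of distinct values among the first `m` draws, `Y_m`. -/
noncomputable def prefCount {N n : ℕ} (ω : Fin n → Fin N) (m : ℕ) : ℕ :=
  ((Finset.univ.filter (fun i : Fin n => (i : ℕ) < m)).image ω).card


open scoped Classical in
lemma per_n {N : ℕ} (k n : ℕ) (p : Fin N → ℝ) (hk1 : 1 ≤ k) (hkN : k ≤ N) :
    (∑ ω : Fin n → Fin N,
        Set.indicator {ω : Fin n → Fin N | (Finset.univ.image ω).card < k}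
          (fun ω => ∏ i, p (ω i)) ω)
      = ∑ A ∈ Finset.univ.powerset.filter (fun A : Finset (Fin N) => A.card ≤ k-1),
          ((-1:ℝ)^(k-1-A.card) * ((N-A.card-1).choose (k-1-A.card))) * (∑ i ∈ A, p i)^n := by
  have hpow : ∀ A : Finset (Fin N), (∑ i ∈ A, p i)^n
      = ∑ ω ∈ Finset.univ.filter (fun ω : Fin n → Fin N => ∀ i, ω i ∈ A), ∏ i, p (ω i) := by
    intro A
    have h1 : (∑ i ∈ A, p i)^n = ∏ _i : Fin n, ∑ j ∈ A, p j := by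
      rw [Finset.prod_const, Finset.card_univ, Fintype.card_fin]
    have h2 : Finset.univ.filter (fun ω : Fin n → Fin N => ∀ i, ω i ∈ A)
        = Fintype.piFinset (fun _ : Fin n => A) := by
      ext g; simp [Fintype.mem_piFinset]
    rw [h1, Finset.prod_univ_sum, h2]
  calc (∑ ω : Fin n → Fin N,
        Set.indicator {ω : Fin n → Fin N | (Finset.univ.image ω).card < k}
          (fun ω => ∏ i, p (ω i)) ω)
      = ∑ ω : Fin n → Fin N, (if (Finset.univ.image ω).card < k then 1 else 0) * ∏ i, p (ω i) := by
        apply Finset.sum_congr rfl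
        intro ω _
        rw [Set.indicator_apply]
        by_cases h : (Finset.univ.image ω).card < k
        · rw [if_pos h, if_pos (by exact h), one_mul]
        · rw [if_neg h, if_neg (by exact h), zero_mul]
    _ = ∑ ω : Fin n → Fin N,
          (∑ A ∈ (Finset.univ.powerset.filter (fun A : Finset (Fin N) => A.card ≤ k-1)).filter
            (fun A => Finset.univ.image ω ⊆ A),
            (-1:ℝ)^(k-1-A.card) * ((N-A.card-1).choose (k-1-A.card))) * ∏ i, p (ω i) := by
        apply Finset.sum_congr rfl
        intro ω _
        rw [coeff k hk1 hkN (Finset.univ.image ω)]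
    _ = ∑ ω : Fin n → Fin N,
          ∑ A ∈ Finset.univ.powerset.filter (fun A : Finset (Fin N) => A.card ≤ k-1),
            (if ∀ i, ω i ∈ A then
              ((-1:ℝ)^(k-1-A.card) * ((N-A.card-1).choose (k-1-A.card))) * ∏ i, p (ω i) else 0) := by
        apply Finset.sum_congr rfl
        intro ω _
        rw [Finset.sum_filter, Finset.sum_mul]
        apply Finset.sum_congr rfl
        intro A _
        have : (Finset.univ.image ω ⊆ A) ↔ ∀ i, ω i ∈ A := by
          rw [Finset.image_subset_iff]
          simp
        by_cases h : ∀ i, ω i ∈ A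
        · rw [if_pos (this.2 h), if_pos h]
        · rw [if_neg (fun hc => h (this.1 hc)), if_neg h, zero_mul]
    _ = ∑ A ∈ Finset.univ.powerset.filter (fun A : Finset (Fin N) => A.card ≤ k-1),
          ((-1:ℝ)^(k-1-A.card) * ((N-A.card-1).choose (k-1-A.card))) * (∑ i ∈ A, p i)^n := by
        rw [Finset.sum_comm]
        apply Finset.sum_congr rfl
        intro A _
        rw [hpow, Finset.mul_sum, ← Finset.sum_filter]

/-- `E(T_k) = ∑_{n ≥ 0} P(T_k > n)
 = ∑_{A ⊆ H, |A| ≤ k-1, p_A < 1} (-1)^{k-1-|A|} C(N-|A|-1, k-1-|A|) / (1 - p_A)`. -/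
theorem stmt_13 (N k : ℕ) (p : Fin N → ℝ) (hp : ∀ i, 0 < p i) (hsum : ∑ i, p i = 1)
    (hk1 : 1 ≤ k) (hkN : k ≤ N) :
    ∑' n : ℕ, prob p {ω : Fin n → Fin N | ∀ m ≤ n, prefCount ω m ≠ k}
      = ∑ A ∈ Finset.univ.powerset.filter
          (fun A : Finset (Fin N) => A.card ≤ k - 1 ∧ ∑ i ∈ A, p i < 1),
          (-1 : ℝ) ^ (k - 1 - A.card) * (Nat.choose (N - A.card - 1) (k - 1 - A.card)) *
            (1 / (1 - ∑ i ∈ A, p i)) := by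
  classical
  -- facts about p_A for small A
  have hpA0 : ∀ A : Finset (Fin N), 0 ≤ ∑ i ∈ A, p i :=
    fun A => Finset.sum_nonneg (fun i _ => (hp i).le)
  have hpA1 : ∀ A : Finset (Fin N), A.card ≤ k - 1 → ∑ i ∈ A, p i < 1 := by
    intro A hA
    have hne : A ≠ Finset.univ := by
      intro h
      have := Finset.card_univ (α := Fin N)
      rw [h, this, Fintype.card_fin] at hA
      omega
    have hex : ∃ x, x ∉ A := by
      by_contra h
      push_neg at h
      exact hne (Finset.eq_univ_iff_forall.2 h)
    obtain ⟨x, hx⟩ := hex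
    have hpos : 0 < ∑ i ∈ Aᶜ, p i :=
      Finset.sum_pos (fun i _ => hp i) ⟨x, Finset.mem_compl.2 hx⟩
    have hadd : (∑ i ∈ A, p i) + ∑ i ∈ Aᶜ, p i = 1 := by
      rw [Finset.sum_add_sum_compl]; exact hsum
    linarith
  -- the filter in the statement simplifies
  have hfilter : Finset.univ.powerset.filter
        (fun A : Finset (Fin N) => A.card ≤ k - 1 ∧ ∑ i ∈ A, p i < 1)
      = Finset.univ.powerset.filter (fun A : Finset (Fin N) => A.card ≤ k - 1) := by
    apply Finset.filter_congr
    intro A _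
    exact ⟨fun h => h.1, fun h => ⟨h, hpA1 A h⟩⟩
  rw [hfilter]
  -- rewrite each prob
  have hprob : ∀ n : ℕ, prob p {ω : Fin n → Fin N | ∀ m ≤ n, prefCount ω m ≠ k}
      = ∑ A ∈ Finset.univ.powerset.filter (fun A : Finset (Fin N) => A.card ≤ k-1),
          ((-1:ℝ)^(k-1-A.card) * ((N-A.card-1).choose (k-1-A.card))) * (∑ i ∈ A, p i)^n := by
    intro n
    rw [← per_n k n p hk1 hkN]
    unfold prob
    apply Finset.sum_congr rfl
    intro ω _
    congr 1
    ext ω'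
    simp only [Set.mem_setOf_eq]
    exact event_iff ω'
  rw [tsum_congr hprob]
  rw [Summable.tsum_finsetSum (fun A hA => by
    rw [Finset.mem_filter] at hA
    exact Summable.mul_left _ (summable_geometric_of_lt_one (hpA0 A) (hpA1 A hA.2)))]
  apply Finset.sum_congr rfl
  intro A hA
  rw [Finset.mem_filter] at hA
  rw [tsum_mul_left, tsum_geometric_of_lt_one (hpA0 A) (hpA1 A hA.2), one_div]
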